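/- Let G be a connected graph and λ ≠ 0 an eigenvalue of its adjacency matrix. Then m_λ(G) ≤ β'(G) + c(G), where β'(G) is the induced matching number and c(G) = |E(G)| − |V(G)| + 1 is the cyclomatic number. -/

import Mathlib

open Module

attribute [local instance] Classical.propDecidable

noncomputable def adjMat {V : Type*} [Fintype V] (G : SimpleGraph V) : Matrix V V ℝ :=
  Matrix.of fun u v => if G.Adj u v then 1 else 0

noncomputable def eigMult {V : Type*} [Fintype V] (G : SimpleGraph V) (μ : ℝ) : ℕ :=
  Module.finrank ℝ (Module.End.eigenspace (adjMat G).mulVecLin μ)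

def HasEig {V : Type*} [Fintype V] (G : SimpleGraph V) (μ : ℝ) : Prop :=
  Module.End.HasEigenvalue (adjMat G).mulVecLin μ

def IsMatchingSet {V : Type*} (G : SimpleGraph V) (M : Finset (Sym2 V)) : Prop :=
  (∀ e ∈ M, e ∈ G.edgeSet) ∧
  ∀ e ∈ M, ∀ f ∈ M, e ≠ f → ∀ v, v ∈ e → v ∉ f

def IsInducedMatchingSet {V : Type*} (G : SimpleGraph V) (M : Finset (Sym2 V)) : Prop :=
  IsMatchingSet G M ∧
  ∀ e ∈ M, ∀ f ∈ M, e ≠ f → ∀ u v, u ∈ e → v ∈ f → ¬ G.Adj u v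

noncomputable def matchNum {V : Type*} [Fintype V] (G : SimpleGraph V) : ℕ :=
  sSup {k | ∃ M, IsMatchingSet G M ∧ M.card = k}

noncomputable def indMatchNum {V : Type*} [Fintype V] (G : SimpleGraph V) : ℕ :=
  sSup {k | ∃ M, IsInducedMatchingSet G M ∧ M.card = k}

noncomputable def cyclomatic {V : Type*} [Fintype V] (G : SimpleGraph V) : ℕ :=
  G.edgeSet.ncard + 1 - Fintype.card V

def delV {V : Type*} (G : SimpleGraph V) (v : V) : SimpleGraph {u : V // u ≠ v} :=
  G.induce {u : V | u ≠ v}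

def starGraph (n : ℕ) : SimpleGraph (Fin (n + 1)) :=
  SimpleGraph.fromRel (fun u _ => u = 0)

def triStar (a : ℕ) : SimpleGraph (Fin 3 ⊕ Fin 3 × Fin a) :=
  SimpleGraph.fromRel (fun x y =>
    (∃ i j, x = Sum.inl i ∧ y = Sum.inl j) ∨
    (∃ i k, x = Sum.inl i ∧ y = Sum.inr (i, k)))

/- ======================= auxiliary development ======================= -/

open SimpleGraph Finset

universe u

section Aux

variable {V : Type u} [Fintype V]

/-- Row formula of the adjacency matrix. -/
lemma mem_nbr (H : SimpleGraph V) {v w : V} : w ∈ H.neighborFinset v ↔ H.Adj v w := by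
  rw [SimpleGraph.mem_neighborFinset]

lemma adjMat_mulVec (H : SimpleGraph V) (x : V → ℝ) (p : V) :
    (adjMat H).mulVec x p = ∑ w ∈ H.neighborFinset p, x w := by
  classical
  rw [SimpleGraph.neighborFinset_eq_filter, Finset.sum_filter]
  simp only [Matrix.mulVec, dotProduct, adjMat, Matrix.of_apply, ite_mul, one_mul,
    zero_mul]

lemma mem_eig_iff (H : SimpleGraph V) (μ : ℝ) (x : V → ℝ) :
    x ∈ Module.End.eigenspace (adjMat H).mulVecLin μ ↔ (adjMat H).mulVec x = μ • x := by
  rw [Module.End.mem_eigenspace_iff, Matrix.mulVecLin_apply]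

lemma row_eq (H : SimpleGraph V) {μ : ℝ} {x : V → ℝ}
    (hx : (adjMat H).mulVec x = μ • x) (p : V) :
    ∑ w ∈ H.neighborFinset p, x w = μ * x p := by
  have := congrFun hx p
  rw [adjMat_mulVec] at this
  simpa using this

lemma eigMult_le_card (H : SimpleGraph V) (μ : ℝ) : eigMult H μ ≤ Fintype.card V := by
  have h := Submodule.finrank_le (Module.End.eigenspace (adjMat H).mulVecLin μ)
  simpa [eigMult, Module.finrank_pi] using h

lemma eigMult_edgeless (H : SimpleGraph V) (hE : H.edgeSet = ∅) {μ : ℝ} (hμ : μ ≠ 0) :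
    eigMult H μ = 0 := by
  have hbot : Module.End.eigenspace (adjMat H).mulVecLin μ = ⊥ := by
    ext x
    rw [mem_eig_iff]
    simp only [Submodule.mem_bot]
    constructor
    · intro hx
      funext p
      have hrow := row_eq H hx p
      have hnb : H.neighborFinset p = ∅ := by
        ext w
        simp only [SimpleGraph.mem_neighborFinset, Finset.notMem_empty, iff_false]
        intro hadj
        have : s(p, w) ∈ H.edgeSet := (H.mem_edgeSet).mpr hadj
        rw [hE] at this
        exact this
      rw [hnb] at hrow
      simp only [Finset.sum_empty] at hrow
      have := hrow.symm
      rcases mul_eq_zero.mp this with h | h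
      · exact absurd h hμ
      · exact h
    · intro hx
      subst hx
      funext p
      rw [adjMat_mulVec]
      simp
  rw [eigMult, hbot]
  simp

/-- Master deletion lemma: if vanishing at `t0` forces an eigenvector to vanish
on all of `S`, then deleting `S` decreases the multiplicity by at most 1. -/
lemma master (H : SimpleGraph V) (μ : ℝ) (S : Set V) (t0 : V) (ht0 : t0 ∈ S)
    (hforce : ∀ x : V → ℝ, (adjMat H).mulVec x = μ • x → x t0 = 0 → ∀ s ∈ S, x s = 0) :
    eigMult H μ ≤ eigMult (H.induce Sᶜ) μ + 1 := by
  classical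
  set W := Module.End.eigenspace (adjMat H).mulVecLin μ with hWdef
  set W' := Module.End.eigenspace (adjMat (H.induce Sᶜ)).mulVecLin μ with hW'def
  let L : W →ₗ[ℝ] ℝ :=
    { toFun := fun x => (x : V → ℝ) t0
      map_add' := fun a b => rfl
      map_smul' := fun c a => rfl }
  have hzero : ∀ x : V → ℝ, x ∈ W → x t0 = 0 → ∀ s ∈ S, x s = 0 := by
    intro x hx h0
    exact hforce x ((mem_eig_iff H μ x).mp hx) h0
  have hmem : ∀ x : LinearMap.ker L, (fun u : ↥(Sᶜ) => ((x : W) : V → ℝ) ↑u) ∈ W' := by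
    rintro ⟨⟨x, hxW⟩, hx0⟩
    have hx0' : x t0 = 0 := hx0
    have hveq : (adjMat H).mulVec x = μ • x := (mem_eig_iff H μ x).mp hxW
    have hS : ∀ s ∈ S, x s = 0 := hzero x hxW hx0'
    rw [hW'def, mem_eig_iff]
    funext u
    rw [adjMat_mulVec]
    have hrow := row_eq H hveq ↑u
    have himg : ((H.induce Sᶜ).neighborFinset u).image (Subtype.val : ↥(Sᶜ) → V) =
        (H.neighborFinset ↑u).filter (fun w => w ∉ S) := by
      ext w
      simp only [Finset.mem_image, SimpleGraph.mem_neighborFinset, Finset.mem_filter]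
      constructor
      · rintro ⟨w', hw', rfl⟩
        have : H.Adj ↑u ↑w' := hw'
        exact ⟨this, w'.2⟩
      · rintro ⟨hadj, hw⟩
        exact ⟨⟨w, hw⟩, hadj, rfl⟩
    have hsum : ∑ w ∈ (H.induce Sᶜ).neighborFinset u, x ↑w
        = ∑ w ∈ (H.neighborFinset ↑u).filter (fun w => w ∉ S), x w := by
      rw [← himg, Finset.sum_image]
      intro a _ b _ hab
      exact Subtype.ext hab
    have hsub : ∑ w ∈ (H.neighborFinset ↑u).filter (fun w => w ∉ S), x w
        = ∑ w ∈ H.neighborFinset ↑u, x w := by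
      apply Finset.sum_subset (Finset.filter_subset _ _)
      intro w hw hw2
      simp only [Finset.mem_filter, not_and, not_not] at hw2
      exact hS w (hw2 hw)
    calc ∑ w ∈ (H.induce Sᶜ).neighborFinset u, x ↑w
        = ∑ w ∈ H.neighborFinset ↑u, x w := by rw [hsum, hsub]
      _ = μ * x ↑u := hrow
      _ = (μ • fun (v : ↥(Sᶜ)) => x ↑v) u := rfl
  let Φ : LinearMap.ker L →ₗ[ℝ] W' :=
    { toFun := fun x => ⟨fun u => ((x : W) : V → ℝ) ↑u, hmem x⟩
      map_add' := fun a b => rfl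
      map_smul' := fun c a => rfl }
  have hinj : Function.Injective Φ := by
    intro a b hab
    have hab' : ∀ u : ↥(Sᶜ), ((a : W) : V → ℝ) ↑u = ((b : W) : V → ℝ) ↑u := by
      intro u
      exact congrFun (congrArg Subtype.val hab) u
    apply Subtype.ext
    apply Subtype.ext
    funext v
    by_cases hv : v ∈ S
    · rw [hzero _ (a : W).2 a.2 v hv, hzero _ (b : W).2 b.2 v hv]
    · exact hab' ⟨v, hv⟩
  have h1 := LinearMap.finrank_range_add_finrank_ker L
  have h2 : finrank ℝ (LinearMap.range L) ≤ 1 := by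
    simpa using Submodule.finrank_le (LinearMap.range L)
  have h3 : finrank ℝ (LinearMap.ker L) ≤ finrank ℝ W' :=
    LinearMap.finrank_le_finrank_of_injective hinj
  have : eigMult H μ = finrank ℝ W := rfl
  have h4 : eigMult (H.induce Sᶜ) μ = finrank ℝ W' := rfl
  omega

/- ----------------- induced matching number ----------------- -/

lemma indMatchNum_bddAbove (H : SimpleGraph V) :
    BddAbove {k | ∃ M, IsInducedMatchingSet H M ∧ M.card = k} := by
  refine ⟨Fintype.card (Sym2 V), ?_⟩
  rintro k ⟨M, _, rfl⟩
  exact Finset.card_le_univ M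

lemma le_indMatchNum (H : SimpleGraph V) {M : Finset (Sym2 V)}
    (h : IsInducedMatchingSet H M) : M.card ≤ indMatchNum H := by
  exact le_csSup (indMatchNum_bddAbove H) ⟨M, h, rfl⟩

lemma exists_indMatch (H : SimpleGraph V) :
    ∃ M, IsInducedMatchingSet H M ∧ M.card = indMatchNum H := by
  have hne : {k | ∃ M, IsInducedMatchingSet H M ∧ M.card = k}.Nonempty := by
    refine ⟨0, ∅, ⟨⟨?_, ?_⟩, ?_⟩, rfl⟩
    · intro e he; exact absurd he (Finset.notMem_empty e)
    · intro e he; exact absurd he (Finset.notMem_empty e)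
    · intro e he; exact absurd he (Finset.notMem_empty e)
  exact Nat.sSup_mem hne (indMatchNum_bddAbove H)

/-- An induced matching in an induced subgraph lifts. -/
lemma lift_indMatch (H : SimpleGraph V) (S : Set V) {M' : Finset (Sym2 ↥(Sᶜ))}
    (h : IsInducedMatchingSet (H.induce Sᶜ) M') :
    IsInducedMatchingSet H (M'.image (Sym2.map (Subtype.val : ↥(Sᶜ) → V))) ∧
      (M'.image (Sym2.map (Subtype.val : ↥(Sᶜ) → V))).card = M'.card ∧
      (∀ e ∈ M'.image (Sym2.map (Subtype.val : ↥(Sᶜ) → V)), ∀ v ∈ e, v ∉ S) := by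
  classical
  set f : ↥(Sᶜ) → V := Subtype.val with hf
  have hfinj : Function.Injective f := Subtype.val_injective
  have hminj : Function.Injective (Sym2.map f) := Sym2.map.injective hfinj
  obtain ⟨⟨hedge, hdisj⟩, hind⟩ := h
  refine ⟨⟨⟨?_, ?_⟩, ?_⟩, Finset.card_image_of_injective M' hminj, ?_⟩
  · rintro e he
    rw [Finset.mem_image] at he
    obtain ⟨e', he', rfl⟩ := he
    induction e' using Sym2.inductionOn with
    | hf a b =>
      have : (H.induce Sᶜ).Adj a b := (SimpleGraph.mem_edgeSet _).mp (hedge _ he')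
      have hab : H.Adj ↑a ↑b := this
      exact (SimpleGraph.mem_edgeSet _).mpr hab
  · rintro e he g hg hne v hve hvg
    rw [Finset.mem_image] at he hg
    obtain ⟨e', he', rfl⟩ := he
    obtain ⟨g', hg', rfl⟩ := hg
    have hne' : e' ≠ g' := fun hc => hne (by rw [hc])
    rw [Sym2.mem_map] at hve hvg
    obtain ⟨a, ha, rfl⟩ := hve
    obtain ⟨b, hb, hba⟩ := hvg
    have : b = a := hfinj hba
    subst this
    exact hdisj e' he' g' hg' hne' b ha hb
  · rintro e he g hg hne u v hue hvg
    rw [Finset.mem_image] at he hg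
    obtain ⟨e', he', rfl⟩ := he
    obtain ⟨g', hg', rfl⟩ := hg
    have hne' : e' ≠ g' := fun hc => hne (by rw [hc])
    rw [Sym2.mem_map] at hue hvg
    obtain ⟨a, ha, rfl⟩ := hue
    obtain ⟨b, hb, rfl⟩ := hvg
    intro hadj
    exact hind e' he' g' hg' hne' a b ha hb hadj
  · rintro e he v hve
    rw [Finset.mem_image] at he
    obtain ⟨e', he', rfl⟩ := he
    rw [Sym2.mem_map] at hve
    obtain ⟨a, _, rfl⟩ := hve
    exact a.2

lemma indMatchNum_induce_le (H : SimpleGraph V) (S : Set V) :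
    indMatchNum (H.induce Sᶜ) ≤ indMatchNum H := by
  obtain ⟨M', hM', hcard⟩ := exists_indMatch (H.induce Sᶜ)
  obtain ⟨h1, h2, _⟩ := lift_indMatch H S hM'
  calc indMatchNum (H.induce Sᶜ) = M'.card := hcard.symm
    _ = _ := h2.symm
    _ ≤ indMatchNum H := le_indMatchNum H h1

lemma indMatchNum_insert (H : SimpleGraph V) (S : Set V) (v0 v1 : V)
    (h01 : H.Adj v0 v1) (h0 : v0 ∈ S) (h1 : v1 ∈ S)
    (hN : ∀ w, w ∉ S → ¬H.Adj v0 w ∧ ¬H.Adj v1 w) :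
    indMatchNum (H.induce Sᶜ) + 1 ≤ indMatchNum H := by
  classical
  obtain ⟨M', hM', hcard⟩ := exists_indMatch (H.induce Sᶜ)
  obtain ⟨⟨⟨hedge, hdisj⟩, hind⟩, h2, havoid⟩ := lift_indMatch H S hM'
  set M := M'.image (Sym2.map (Subtype.val : ↥(Sᶜ) → V)) with hM
  have hnotmem : s(v0, v1) ∉ M := by
    intro hc
    have : v0 ∉ S := havoid _ hc v0 (by rw [Sym2.mem_iff]; left; rfl)
    exact this h0
  have hnew : IsInducedMatchingSet H (insert s(v0, v1) M) := by
    refine ⟨⟨?_, ?_⟩, ?_⟩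
    · intro e he
      rcases Finset.mem_insert.mp he with rfl | he
      · exact (SimpleGraph.mem_edgeSet _).mpr h01
      · exact hedge e he
    · intro e he g hg hne v hve hvg
      rcases Finset.mem_insert.mp he with rfl | he <;>
        rcases Finset.mem_insert.mp hg with rfl | hg
      · exact hne rfl
      · have hvS : v ∉ S := havoid _ hg v hvg
        rcases Sym2.mem_iff.mp hve with rfl | rfl
        · exact hvS h0
        · exact hvS h1
      · have hvS : v ∉ S := havoid _ he v hve
        rcases Sym2.mem_iff.mp hvg with rfl | rfl
        · exact hvS h0
        · exact hvS h1
      · exact hdisj e he g hg hne v hve hvg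
    · intro e he g hg hne u v hue hvg
      rcases Finset.mem_insert.mp he with rfl | he <;>
        rcases Finset.mem_insert.mp hg with rfl | hg
      · exact absurd rfl hne
      · have hvS : v ∉ S := havoid _ hg v hvg
        rcases Sym2.mem_iff.mp hue with rfl | rfl
        · exact (hN v hvS).1
        · exact (hN v hvS).2
      · have huS : u ∉ S := havoid _ he u hue
        rcases Sym2.mem_iff.mp hvg with rfl | rfl
        · intro hadj; exact (hN u huS).1 hadj.symm
        · intro hadj; exact (hN u huS).2 hadj.symm
      · exact hind e he g hg hne u v hue hvg
  have hcard2 : (insert s(v0, v1) M).card = M'.card + 1 := by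
    rw [Finset.card_insert_of_notMem hnotmem, h2]
  have := le_indMatchNum H hnew
  omega

/- ----------------- walks and components ----------------- -/

lemma walk_avoid (H : SimpleGraph V) (D : Set V) :
    ∀ {x y : V} (p : H.Walk x y), (∀ v ∈ p.support, v ∉ D) →
      ∀ (hx : x ∉ D) (hy : y ∉ D),
      (H.induce Dᶜ).Reachable ⟨x, hx⟩ ⟨y, hy⟩ := by
  intro x y p
  induction p with
  | nil =>
    intro _ hx hy
    exact SimpleGraph.Reachable.refl _
  | @cons a b c h q ih =>
    intro hp hx hy
    have hb : b ∉ D := hp b (by rw [SimpleGraph.Walk.support_cons]; exact List.mem_cons_of_mem _ q.start_mem_support)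
    have h1 : (H.induce Dᶜ).Adj ⟨a, hx⟩ ⟨b, hb⟩ := h
    refine h1.reachable.trans (ih ?_ hb hy)
    intro v hv
    exact hp v (by rw [SimpleGraph.Walk.support_cons]; exact List.mem_cons_of_mem _ hv)

lemma first_exit (H : SimpleGraph V) (D : Set V) :
    ∀ {x z : V} (p : H.Walk x z) (hx : x ∉ D), z ∈ D →
      ∃ w, ∃ hw : w ∉ D, (∃ y ∈ D, H.Adj w y) ∧
        (H.induce Dᶜ).Reachable ⟨x, hx⟩ ⟨w, hw⟩ := by
  intro x z p
  induction p with
  | nil =>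
    intro hx hz
    exact absurd hz hx
  | @cons a b c h q ih =>
    intro hx hz
    by_cases hb : b ∈ D
    · exact ⟨a, hx, ⟨b, hb, h⟩, SimpleGraph.Reachable.refl _⟩
    · obtain ⟨w, hw, hwy, hr⟩ := ih hb hz
      have h1 : (H.induce Dᶜ).Adj ⟨a, hx⟩ ⟨b, hb⟩ := h
      exact ⟨w, hw, hwy, h1.reachable.trans hr⟩

lemma comps_master (H : SimpleGraph V) (D : Set V) (d0 : V) (hd0 : d0 ∈ D)
    (hone : ∀ d ∈ D, H.Reachable d d0) (R : Finset V)
    (hR : ∀ x, ∀ hx : x ∉ D, H.Reachable x d0 →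
      ∃ r, ∃ hr : r ∉ D, r ∈ R ∧ (H.induce Dᶜ).Reachable ⟨x, hx⟩ ⟨r, hr⟩) :
    Nat.card (H.induce Dᶜ).ConnectedComponent + 1 ≤
      Nat.card H.ConnectedComponent + R.card := by
  classical
  set K0 := H.connectedComponentMk d0 with hK0
  set G' := H.induce Dᶜ with hG'
  have hrep : ∀ K : G'.ConnectedComponent, ∃ x, G'.connectedComponentMk x = K :=
    fun K => K.exists_rep
  -- the injection
  have hinj : ∃ F : G'.ConnectedComponent → ({K : H.ConnectedComponent // K ≠ K0} ⊕ {r : V // r ∈ R}),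
      Function.Injective F := by
    have hchoice : ∀ K : G'.ConnectedComponent,
        ∃ y : ({K : H.ConnectedComponent // K ≠ K0} ⊕ {r : V // r ∈ R}),
        (∀ L hL, y = Sum.inl ⟨L, hL⟩ → ∃ x : ↥(Dᶜ), G'.connectedComponentMk x = K ∧
            H.connectedComponentMk ↑x = L) ∧
        (∀ r hr, y = Sum.inr ⟨r, hr⟩ → ∃ x : ↥(Dᶜ), G'.connectedComponentMk x = K ∧
            ∃ hrD : r ∉ D, G'.Reachable x ⟨r, hrD⟩) := by
      intro K
      obtain ⟨x, hx⟩ := hrep K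
      by_cases hc : H.connectedComponentMk ↑x = K0
      · have hreach : H.Reachable ↑x d0 := SimpleGraph.ConnectedComponent.eq.mp hc
        obtain ⟨r, hrD, hrR, hreach'⟩ := hR ↑x x.2 hreach
        refine ⟨Sum.inr ⟨r, hrR⟩, ?_, ?_⟩
        · intro L hL hy; exact absurd hy (by simp)
        · intro r' hr' hy
          have : r' = r := by
            have := Sum.inr.inj hy
            exact (congrArg Subtype.val this).symm
          subst this
          refine ⟨x, hx, hrD, ?_⟩
          have hxeq : (⟨↑x, x.2⟩ : ↥(Dᶜ)) = x := rfl
          rw [← hxeq]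
          exact hreach'
      · refine ⟨Sum.inl ⟨H.connectedComponentMk ↑x, hc⟩, ?_, ?_⟩
        · intro L hL hy
          have : H.connectedComponentMk ↑x = L := by
            have := Sum.inl.inj hy
            exact congrArg Subtype.val this
          exact ⟨x, hx, this⟩
        · intro r hr hy; exact absurd hy (by simp)
    choose F hF1 hF2 using hchoice
    refine ⟨F, ?_⟩
    intro K1 K2 heq
    match hy1 : F K1, hy2 : F K2 with
    | Sum.inl ⟨L1, hL1⟩, Sum.inl ⟨L2, hL2⟩ =>
      rw [hy1, hy2] at heq
      have hLL : L1 = L2 := by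
        have := Sum.inl.inj heq
        exact congrArg Subtype.val this
      subst hLL
      obtain ⟨x1, hx1, hc1⟩ := hF1 K1 L1 hL1 hy1
      obtain ⟨x2, hx2, hc2⟩ := hF1 K2 L1 hL2 hy2
      -- x1 and x2 are H-reachable; get a walk avoiding D
      have hreach : H.Reachable ↑x1 ↑x2 := by
        apply SimpleGraph.ConnectedComponent.eq.mp
        rw [hc1, hc2]
      obtain ⟨p⟩ := hreach
      have hsupp : ∀ v ∈ p.support, v ∉ D := by
        intro v hv hvD
        have : H.Reachable ↑x1 v := ⟨p.takeUntil v hv⟩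
        have : H.Reachable ↑x1 d0 := this.trans (hone v hvD)
        have : H.connectedComponentMk ↑x1 = K0 := SimpleGraph.ConnectedComponent.eq.mpr this
        rw [hc1] at this
        exact hL1 this
      have := walk_avoid H D p hsupp x1.2 x2.2
      have hre : G'.Reachable x1 x2 := this
      rw [← hx1, ← hx2]
      exact SimpleGraph.ConnectedComponent.eq.mpr hre
    | Sum.inl _, Sum.inr _ => rw [hy1, hy2] at heq; exact absurd heq (by simp)
    | Sum.inr _, Sum.inl _ => rw [hy1, hy2] at heq; exact absurd heq (by simp)
    | Sum.inr ⟨r1, hr1⟩, Sum.inr ⟨r2, hr2⟩ =>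
      rw [hy1, hy2] at heq
      have hrr : r1 = r2 := by
        have := Sum.inr.inj heq
        exact congrArg Subtype.val this
      subst hrr
      obtain ⟨x1, hx1, hD1, hre1⟩ := hF2 K1 r1 hr1 hy1
      obtain ⟨x2, hx2, hD2, hre2⟩ := hF2 K2 r1 hr2 hy2
      have : G'.Reachable x1 x2 := hre1.trans hre2.symm
      rw [← hx1, ← hx2]
      exact SimpleGraph.ConnectedComponent.eq.mpr this
  obtain ⟨F, hFinj⟩ := hinj
  have hcard := Nat.card_le_card_of_injective F hFinj
  rw [Nat.card_sum] at hcard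
  have hcc1 : Nat.card {K : H.ConnectedComponent // K = K0} = 1 := by
    rw [Nat.card_eq_one_iff_unique]
    exact ⟨⟨fun a b => Subtype.ext (a.2.trans b.2.symm)⟩, ⟨⟨K0, rfl⟩⟩⟩
  have hsplit : Nat.card {K : H.ConnectedComponent // K = K0} +
      Nat.card {K : H.ConnectedComponent // K ≠ K0} = Nat.card H.ConnectedComponent := by
    rw [← Nat.card_sum]
    exact Nat.card_congr (Equiv.sumCompl (fun K => K = K0))
  have hr : Nat.card {r : V // r ∈ R} = R.card := by
    rw [Nat.card_eq_fintype_card]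
    exact Fintype.card_coe R
  omega

lemma comps_edgeless (H : SimpleGraph V) (hE : H.edgeSet = ∅) :
    Nat.card H.ConnectedComponent = Fintype.card V := by
  have hbot : H = ⊥ := SimpleGraph.edgeSet_eq_empty.mp hE
  subst hbot
  have hbij : Function.Bijective ((⊥ : SimpleGraph V).connectedComponentMk) := by
    constructor
    · intro u v huv
      have hre : (⊥ : SimpleGraph V).Reachable u v := SimpleGraph.ConnectedComponent.eq.mp huv
      obtain ⟨p⟩ := hre
      cases p with
      | nil => rfl
      | cons h q => exact absurd h (by simp)
    · intro K
      obtain ⟨v, hv⟩ := K.exists_rep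
      exact ⟨v, hv⟩
  calc Nat.card (⊥ : SimpleGraph V).ConnectedComponent
      = Nat.card V := (Nat.card_congr (Equiv.ofBijective _ hbij)).symm
    _ = Fintype.card V := Nat.card_eq_fintype_card

/- ----------------- counting ----------------- -/

lemma card_compl_set (S : Set V) :
    Sᶜ.ncard + S.ncard = Fintype.card V := by
  rw [← Nat.card_eq_fintype_card, add_comm, Set.ncard_add_ncard_compl]

lemma edge_count (H : SimpleGraph V) (D : Set V) :
    H.edgeSet.ncard =
      (H.induce Dᶜ).edgeSet.ncard +
        (H.edgeFinset.filter (fun e => ∃ v ∈ e, v ∈ D)).card := by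
  classical
  have hbij : (H.induce Dᶜ).edgeFinset.card
      = (H.edgeFinset.filter (fun e => ¬ ∃ v ∈ e, v ∈ D)).card := by
    apply Finset.card_bij (fun e _ => Sym2.map (Subtype.val : ↥(Dᶜ) → V) e)
    · intro e he
      rw [SimpleGraph.mem_edgeFinset] at he
      rw [Finset.mem_filter]
      induction e using Sym2.inductionOn with
      | hf a b =>
        have hadj : (H.induce Dᶜ).Adj a b := (SimpleGraph.mem_edgeSet _).mp he
        have hab : H.Adj ↑a ↑b := hadj
        constructor
        · rw [Sym2.map_pair_eq, SimpleGraph.mem_edgeFinset]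
          exact (SimpleGraph.mem_edgeSet _).mpr hab
        · rw [Sym2.map_pair_eq]
          rintro ⟨v, hv, hvD⟩
          rcases Sym2.mem_iff.mp hv with rfl | rfl
          · exact a.2 hvD
          · exact b.2 hvD
    · intro e1 h1 e2 h2 heq
      exact Sym2.map.injective Subtype.val_injective heq
    · intro e he
      rw [Finset.mem_filter, SimpleGraph.mem_edgeFinset] at he
      obtain ⟨hee, hnd⟩ := he
      induction e using Sym2.inductionOn with
      | hf a b =>
        have hadj : H.Adj a b := (SimpleGraph.mem_edgeSet _).mp hee
        have haD : a ∉ D := fun h => hnd ⟨a, by simp, h⟩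
        have hbD : b ∉ D := fun h => hnd ⟨b, by simp, h⟩
        have hadj' : (H.induce Dᶜ).Adj ⟨a, haD⟩ ⟨b, hbD⟩ := hadj
        refine ⟨s(⟨a, haD⟩, ⟨b, hbD⟩), ?_, ?_⟩
        · rw [SimpleGraph.mem_edgeFinset]
          exact (SimpleGraph.mem_edgeSet _).mpr hadj'
        · rw [Sym2.map_pair_eq]
  have hpart := Finset.card_filter_add_card_filter_not
    (s := H.edgeFinset) (p := fun e => ∃ v ∈ e, v ∈ D)
  have h1 : H.edgeSet.ncard = H.edgeFinset.card := by
    rw [Set.ncard_eq_toFinset_card']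
    convert rfl
    ext e; simp
  have h2 : (H.induce Dᶜ).edgeSet.ncard = (H.induce Dᶜ).edgeFinset.card := by
    rw [Set.ncard_eq_toFinset_card']
    convert rfl
    ext e; simp
  omega

/- ----------------- longest path structure ----------------- -/

lemma exists_good_edge (H : SimpleGraph V) (hE : H.edgeSet ≠ ∅)
    (hnB : ∀ (v u w : V) (hu : u ∈ ({v}ᶜ : Set V)) (hw : w ∈ ({v}ᶜ : Set V)),
      H.Adj v u → H.Adj v w → u ≠ w →
      ¬(H.induce ({v}ᶜ : Set V)).Reachable ⟨u, hu⟩ ⟨w, hw⟩) :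
    (∃ v0 v1, H.Adj v0 v1 ∧ (∀ w, H.Adj v0 w → w = v1) ∧ (∀ w, H.Adj v1 w → w = v0)) ∨
    (∃ v0 v1 v2, H.Adj v0 v1 ∧ H.Adj v1 v2 ∧ v0 ≠ v2 ∧
      (∀ w, H.Adj v0 w → w = v1) ∧
      (∀ w, H.Adj v1 w → w = v0 ∨ w = v2 ∨ (∀ z, H.Adj w z → z = v1))) := by
  classical
  obtain ⟨e, he⟩ := Set.nonempty_iff_ne_empty.mpr hE
  set PL : Set ℕ := {l | ∃ (x y : V) (p : H.Walk x y), p.IsPath ∧ p.length = l} with hPL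
  have hbdd : BddAbove PL := by
    refine ⟨Fintype.card V, ?_⟩
    rintro l ⟨x, y, p, hp, rfl⟩
    exact le_of_lt hp.length_lt
  have h1mem : 1 ∈ PL := by
    induction e using Sym2.inductionOn with
    | hf a b =>
      have hab : H.Adj a b := (SimpleGraph.mem_edgeSet _).mp he
      exact ⟨a, b, SimpleGraph.Walk.cons hab SimpleGraph.Walk.nil, by simp [hab.ne], rfl⟩
  have hLmem : sSup PL ∈ PL := Nat.sSup_mem ⟨1, h1mem⟩ hbdd
  set L := sSup PL with hLdef
  have hL1 : 1 ≤ L := le_csSup hbdd h1mem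
  have hmax : ∀ {x y : V} (p : H.Walk x y), p.IsPath → p.length ≤ L := by
    intro x y p hp
    exact le_csSup hbdd ⟨x, y, p, hp, rfl⟩
  obtain ⟨v0, y0, p, hp, hlen⟩ := hLmem
  cases p with
  | nil => simp at hlen; omega
  | @cons _ v1 _ h q =>
    have hq := (SimpleGraph.Walk.cons_isPath_iff h q).mp hp
    have hqpath : q.IsPath := hq.1
    have hv0q : v0 ∉ q.support := hq.2
    rw [SimpleGraph.Walk.length_cons] at hlen
    -- (a) v0 is a leaf
    have hA : ∀ w, H.Adj v0 w → w = v1 := by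
      intro w hw
      by_contra hne
      by_cases hws : w ∈ q.support
      · have hv1m : v1 ∈ ({v0}ᶜ : Set V) := h.ne'
        have hwm : w ∈ ({v0}ᶜ : Set V) := hw.ne'
        have hreach : (H.induce ({v0}ᶜ : Set V)).Reachable ⟨v1, hv1m⟩ ⟨w, hwm⟩ := by
          apply walk_avoid H ({v0} : Set V) (q.takeUntil w hws)
          intro v hv hvD
          rw [Set.mem_singleton_iff] at hvD
          subst hvD
          exact hv0q (SimpleGraph.Walk.support_takeUntil_subset _ _ hv)
        exact hnB v0 v1 w hv1m hwm h hw (fun heq => hne (heq.symm)) hreach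
      · have hwp : w ∉ (SimpleGraph.Walk.cons h q).support := by
          rw [SimpleGraph.Walk.support_cons]
          intro hmem
          rcases List.mem_cons.mp hmem with rfl | hmm
          · exact hw.ne rfl
          · exact hws hmm
        have hnew : (SimpleGraph.Walk.cons hw.symm (SimpleGraph.Walk.cons h q)).IsPath := by
          rw [SimpleGraph.Walk.cons_isPath_iff]
          exact ⟨hp, hwp⟩
        have := hmax _ hnew
        rw [SimpleGraph.Walk.length_cons, SimpleGraph.Walk.length_cons] at this
        omega
    cases q with
    | nil =>
      -- the edge v0v1 is an isolated edge
      left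
      refine ⟨v0, y0, h, hA, ?_⟩
      intro w hw
      by_contra hne
      have hwv1 : w ≠ y0 := hw.ne'
      have hrev : (SimpleGraph.Walk.cons h SimpleGraph.Walk.nil).reverse.IsPath :=
        hp.reverse
      have hwsup : w ∉ (SimpleGraph.Walk.cons h SimpleGraph.Walk.nil).reverse.support := by
        rw [SimpleGraph.Walk.support_reverse]
        intro hmem
        rw [List.mem_reverse] at hmem
        rw [SimpleGraph.Walk.support_cons, SimpleGraph.Walk.support_nil] at hmem
        rcases List.mem_cons.mp hmem with rfl | hmm
        · exact hne rfl
        · rcases List.mem_singleton.mp hmm with rfl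
          exact hwv1 rfl
      have hnew : (SimpleGraph.Walk.cons hw.symm
          (SimpleGraph.Walk.cons h SimpleGraph.Walk.nil).reverse).IsPath := by
        rw [SimpleGraph.Walk.cons_isPath_iff]
        exact ⟨hrev, hwsup⟩
      have := hmax _ hnew
      rw [SimpleGraph.Walk.length_cons, SimpleGraph.Walk.length_reverse] at this
      simp only [SimpleGraph.Walk.length_cons, SimpleGraph.Walk.length_nil] at this hlen
      omega
    | @cons _ v2 _ h2 r =>
      -- long path case
      right
      have hr := (SimpleGraph.Walk.cons_isPath_iff h2 r).mp hqpath
      have hv1r : v1 ∉ r.support := hr.2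
      have hv02 : v0 ≠ v2 := by
        intro hc
        subst hc
        apply hv0q
        rw [SimpleGraph.Walk.support_cons]
        exact List.mem_cons_of_mem _ r.start_mem_support
      refine ⟨v0, v1, v2, h, h2, hv02, hA, ?_⟩
      intro w hw
      by_cases hw0 : w = v0
      · exact Or.inl hw0
      by_cases hw2 : w = v2
      · exact Or.inr (Or.inl hw2)
      refine Or.inr (Or.inr ?_)
      have hwv1 : w ≠ v1 := hw.ne'
      -- w is not on the path
      have hwq : w ∉ (SimpleGraph.Walk.cons h2 r).support := by
        intro hws
        have hwr : w ∈ r.support := by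
          rw [SimpleGraph.Walk.support_cons] at hws
          rcases List.mem_cons.mp hws with rfl | hmm
          · exact absurd rfl hwv1
          · exact hmm
        have hv2m : v2 ∈ ({v1}ᶜ : Set V) := h2.ne'
        have hwm : w ∈ ({v1}ᶜ : Set V) := hwv1
        have hreach : (H.induce ({v1}ᶜ : Set V)).Reachable ⟨v2, hv2m⟩ ⟨w, hwm⟩ := by
          apply walk_avoid H ({v1} : Set V) (r.takeUntil w hwr)
          intro v hv hvD
          rw [Set.mem_singleton_iff] at hvD
          subst hvD
          exact hv1r (SimpleGraph.Walk.support_takeUntil_subset _ _ hv)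
        exact hnB v1 v2 w hv2m hwm h2 hw (fun heq => hw2 (heq.symm)) hreach
      intro z hz
      by_contra hzne
      by_cases hz0 : z = v0
      · subst hz0
        exact hwv1 (hA w hz.symm)
      by_cases hzq : z ∈ (SimpleGraph.Walk.cons h2 r).support
      · -- z on the path, beyond v1 : contradiction with hnB at v1
        have hzr : z ∈ r.support := by
          rw [SimpleGraph.Walk.support_cons] at hzq
          rcases List.mem_cons.mp hzq with rfl | hmm
          · exact absurd rfl hzne
          · exact hmm
        have hv2m : v2 ∈ ({v1}ᶜ : Set V) := h2.ne'
        have hzm : z ∈ ({v1}ᶜ : Set V) := hzne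
        have hwm : w ∈ ({v1}ᶜ : Set V) := hwv1
        have hreach1 : (H.induce ({v1}ᶜ : Set V)).Reachable ⟨v2, hv2m⟩ ⟨z, hzm⟩ := by
          apply walk_avoid H ({v1} : Set V) (r.takeUntil z hzr)
          intro v hv hvD
          rw [Set.mem_singleton_iff] at hvD
          subst hvD
          exact hv1r (SimpleGraph.Walk.support_takeUntil_subset _ _ hv)
        have hadj2 : (H.induce ({v1}ᶜ : Set V)).Adj ⟨z, hzm⟩ ⟨w, hwm⟩ := hz.symm
        have hreach : (H.induce ({v1}ᶜ : Set V)).Reachable ⟨v2, hv2m⟩ ⟨w, hwm⟩ :=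
          hreach1.trans hadj2.reachable
        exact hnB v1 v2 w hv2m hwm h2 hw (fun heq => hw2 (heq.symm)) hreach
      · -- extend the path by two vertices
        have hstep1 : (SimpleGraph.Walk.cons hw.symm (SimpleGraph.Walk.cons h2 r)).IsPath := by
          rw [SimpleGraph.Walk.cons_isPath_iff]
          exact ⟨hqpath, hwq⟩
        have hzsup : z ∉ (SimpleGraph.Walk.cons hw.symm (SimpleGraph.Walk.cons h2 r)).support := by
          rw [SimpleGraph.Walk.support_cons]
          intro hmem
          rcases List.mem_cons.mp hmem with rfl | hmm
          · exact hz.ne' rfl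
          · exact hzq hmm
        have hnew : (SimpleGraph.Walk.cons hz.symm
            (SimpleGraph.Walk.cons hw.symm (SimpleGraph.Walk.cons h2 r))).IsPath := by
          rw [SimpleGraph.Walk.cons_isPath_iff]
          exact ⟨hstep1, hzsup⟩
        have := hmax _ hnew
        simp only [SimpleGraph.Walk.length_cons] at this hlen
        omega

end Aux

/- ----------------- the main induction ----------------- -/

theorem key : ∀ (n : ℕ) (V : Type u) [Fintype V], Fintype.card V = n →
    ∀ (H : SimpleGraph V) (μ : ℝ), μ ≠ 0 →
    eigMult H μ + Fintype.card V ≤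
      indMatchNum H + H.edgeSet.ncard + Nat.card H.ConnectedComponent := by
  intro n
  induction n using Nat.strong_induction_on with
  | _ n IH =>
  intro V instV hn H μ hμ
  by_cases hE : H.edgeSet = ∅
  · -- Case A : no edges at all
    rw [eigMult_edgeless H hE hμ, comps_edgeless H hE]
    have hm : H.edgeSet.ncard = 0 := by rw [hE]; simp
    omega
  by_cases hB : ∃ (v u w : V), ∃ (hu : u ∈ ({v}ᶜ : Set V)) (hw : w ∈ ({v}ᶜ : Set V)),
      H.Adj v u ∧ H.Adj v w ∧ u ≠ w ∧ (H.induce ({v}ᶜ : Set V)).Reachable ⟨u, hu⟩ ⟨w, hw⟩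
  · -- Case B : a vertex lying on a cycle
    obtain ⟨v, u, w, hu, hw, hadju, hadjw, huw, hreach⟩ := hB
    have hcard : (({v} : Set V)ᶜ).ncard + ({v} : Set V).ncard = Fintype.card V :=
      card_compl_set ({v} : Set V)
    have hDcard : ({v} : Set V).ncard = 1 := Set.ncard_singleton v
    have hcoe : Fintype.card ↥(({v} : Set V)ᶜ) = (({v} : Set V)ᶜ).ncard := by
      rw [← Nat.card_coe_set_eq, Nat.card_eq_fintype_card]
    have hlt : Fintype.card ↥(({v} : Set V)ᶜ) < n := by omega
    have hIH := IH _ hlt ↥(({v} : Set V)ᶜ) rfl (H.induce ({v} : Set V)ᶜ) μ hμ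
    have hmaster : eigMult H μ ≤ eigMult (H.induce ({v} : Set V)ᶜ) μ + 1 := by
      apply master H μ ({v} : Set V) v rfl
      intro x _ h0 s hs
      rw [Set.mem_singleton_iff] at hs
      subst hs
      exact h0
    have hmatch : indMatchNum (H.induce ({v} : Set V)ᶜ) ≤ indMatchNum H :=
      indMatchNum_induce_le H ({v} : Set V)
    have hedge := edge_count H ({v} : Set V)
    have hdeg : H.degree v = (H.neighborFinset v).card := rfl
    have hinc : (H.neighborFinset v).card ≤
        (H.edgeFinset.filter (fun e => ∃ x ∈ e, x ∈ ({v} : Set V))).card := by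
      rw [← hdeg, ← SimpleGraph.card_incidenceFinset_eq_degree]
      apply Finset.card_le_card
      intro e hee
      rw [SimpleGraph.mem_incidenceFinset] at hee
      rw [Finset.mem_filter]
      exact ⟨SimpleGraph.mem_edgeFinset.mpr hee.1, v, hee.2, rfl⟩
    have hcomps : Nat.card (H.induce ({v} : Set V)ᶜ).ConnectedComponent + 1 ≤
        Nat.card H.ConnectedComponent + ((H.neighborFinset v).erase u).card := by
      apply comps_master H ({v} : Set V) v rfl
      · intro d hd
        rw [Set.mem_singleton_iff] at hd
        subst hd
        exact SimpleGraph.Reachable.refl _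
      · intro x hx hxv
        obtain ⟨p⟩ := hxv
        obtain ⟨w', hw', ⟨y, hy, hadj⟩, hre⟩ := first_exit H ({v} : Set V) p hx rfl
        rw [Set.mem_singleton_iff] at hy
        subst hy
        by_cases hwu : w' = u
        · subst hwu
          refine ⟨w, hw, ?_, ?_⟩
          · exact Finset.mem_erase.mpr ⟨fun hc => huw hc.symm,
              (mem_nbr H).mpr hadjw⟩
          · exact hre.trans hreach
        · refine ⟨w', hw', ?_, hre⟩
          exact Finset.mem_erase.mpr ⟨hwu, (mem_nbr H).mpr hadj.symm⟩
    have herase : ((H.neighborFinset v).erase u).card + 1 = (H.neighborFinset v).card :=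
      Finset.card_erase_add_one ((mem_nbr H).mpr hadju)
    have hedge' : H.edgeSet.ncard = (H.induce ({v} : Set V)ᶜ).edgeSet.ncard +
        (H.edgeFinset.filter (fun e => ∃ x ∈ e, x ∈ ({v} : Set V))).card := by
      convert hedge
    omega
  · -- Case C : forest-like situation
    push_neg at hB
    have hnB : ∀ (v u w : V) (hu : u ∈ ({v}ᶜ : Set V)) (hw : w ∈ ({v}ᶜ : Set V)),
        H.Adj v u → H.Adj v w → u ≠ w →
        ¬(H.induce ({v}ᶜ : Set V)).Reachable ⟨u, hu⟩ ⟨w, hw⟩ := by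
      intro v u w hu hw h1 h2 h3
      exact hB v u w hu hw h1 h2 h3
    rcases exists_good_edge H hE hnB with ⟨v0, v1, h01, hA, hB0⟩ |
      ⟨v0, v1, v2, h01, h12, h02, hA, hB1⟩
    · -- isolated edge v0v1
      have hne01 : v0 ≠ v1 := h01.ne
      obtain ⟨S, hSdef⟩ : ∃ S : Set V, S = ({v0, v1} : Set V) := ⟨_, rfl⟩
      have hv0S : v0 ∈ S := by rw [hSdef]; exact Set.mem_insert _ _
      have hv1S : v1 ∈ S := by rw [hSdef]; exact Set.mem_insert_of_mem _ rfl
      have hcard : Sᶜ.ncard + S.ncard = Fintype.card V := card_compl_set S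
      have hDcard : S.ncard = 2 := by rw [hSdef]; exact Set.ncard_pair hne01
      have hcoe : Fintype.card ↥(Sᶜ) = Sᶜ.ncard := by
        rw [← Nat.card_coe_set_eq, Nat.card_eq_fintype_card]
      have hlt : Fintype.card ↥(Sᶜ) < n := by omega
      have hIH := IH _ hlt ↥(Sᶜ) rfl (H.induce Sᶜ) μ hμ
      have hN0 : H.neighborFinset v0 = {v1} := by
        ext w
        rw [SimpleGraph.mem_neighborFinset, Finset.mem_singleton]
        exact ⟨fun hw => hA w hw, fun hw => hw ▸ h01⟩
      have hmaster : eigMult H μ ≤ eigMult (H.induce Sᶜ) μ + 1 := by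
        apply master H μ S v0 hv0S
        intro x hx h0 s hs
        have h1 : x v1 = 0 := by
          have hrow := row_eq H hx v0
          rw [hN0, Finset.sum_singleton, h0, mul_zero] at hrow
          exact hrow
        rw [hSdef] at hs
        rcases Set.mem_insert_iff.mp hs with rfl | hs1
        · exact h0
        · rw [Set.mem_singleton_iff] at hs1
          subst hs1
          exact h1
      have hmatch : indMatchNum (H.induce Sᶜ) + 1 ≤ indMatchNum H := by
        apply indMatchNum_insert H S v0 v1 h01 hv0S hv1S
        intro w hwD
        constructor
        · intro hadj
          apply hwD
          rw [hSdef]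
          exact Set.mem_insert_of_mem _ (hA w hadj)
        · intro hadj
          apply hwD
          rw [hSdef, hB0 w hadj]
          exact Set.mem_insert _ _
      have hedge := edge_count H S
      have hone : ({s(v0, v1)} : Finset (Sym2 V)) ⊆
          H.edgeFinset.filter (fun e => ∃ x ∈ e, x ∈ S) := by
        rw [Finset.singleton_subset_iff, Finset.mem_filter]
        refine ⟨SimpleGraph.mem_edgeFinset.mpr ((SimpleGraph.mem_edgeSet _).mpr h01),
          v0, ?_, hv0S⟩
        rw [Sym2.mem_iff]
        exact Or.inl rfl
      have hinc : 1 ≤ (H.edgeFinset.filter (fun e => ∃ x ∈ e, x ∈ S)).card := by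
        have := Finset.card_le_card hone
        simpa using this
      have hcomps : Nat.card (H.induce Sᶜ).ConnectedComponent + 1 ≤
          Nat.card H.ConnectedComponent + (∅ : Finset V).card := by
        apply comps_master H S v0 hv0S
        · intro d hd
          rw [hSdef] at hd
          rcases Set.mem_insert_iff.mp hd with rfl | hd1
          · exact SimpleGraph.Reachable.refl _
          · rw [Set.mem_singleton_iff] at hd1
            subst hd1
            exact (h01.symm).reachable
        · intro x hx hxv
          obtain ⟨p⟩ := hxv
          obtain ⟨w', hw', ⟨y, hy, hadj⟩, hre⟩ := first_exit H S p hx hv0S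
          exfalso
          rw [hSdef] at hy
          rcases Set.mem_insert_iff.mp hy with rfl | hy1
          · apply hw'
            rw [hSdef, hA w' hadj.symm]
            exact Set.mem_insert_of_mem _ rfl
          · rw [Set.mem_singleton_iff] at hy1
            subst hy1
            apply hw'
            rw [hSdef, hB0 w' hadj.symm]
            exact Set.mem_insert _ _
      simp only [Finset.card_empty] at hcomps
      omega
    · -- pendant-path configuration v0 - v1 - v2
      obtain ⟨S, hSdef⟩ : ∃ S : Set V, S = (insert v1 (H.neighborSet v1) : Set V) := ⟨_, rfl⟩
      have hv0S : v0 ∈ S := by rw [hSdef]; exact Set.mem_insert_of_mem _ h01.symm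
      have hv1S : v1 ∈ S := by rw [hSdef]; exact Set.mem_insert _ _
      have hv2S : v2 ∈ S := by rw [hSdef]; exact Set.mem_insert_of_mem _ h12
      have hcard : Sᶜ.ncard + S.ncard = Fintype.card V := card_compl_set S
      have hcoe : Fintype.card ↥(Sᶜ) = Sᶜ.ncard := by
        rw [← Nat.card_coe_set_eq, Nat.card_eq_fintype_card]
      have hset : (↑(H.neighborFinset v1) : Set V) = H.neighborSet v1 := by
        rw [SimpleGraph.neighborFinset_def, Set.coe_toFinset]
      have hnn : (H.neighborSet v1).ncard = (H.neighborFinset v1).card := by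
        rw [← Set.ncard_coe_finset, hset]
      have hDcard : S.ncard = (H.neighborFinset v1).card + 1 := by
        rw [hSdef, Set.ncard_insert_of_notMem (by simp), hnn]
      have hd1pos : 1 ≤ (H.neighborFinset v1).card := by
        refine Finset.card_pos.mpr ⟨v0, ?_⟩
        exact (mem_nbr H).mpr h01.symm
      have hlt : Fintype.card ↥(Sᶜ) < n := by omega
      have hIH := IH _ hlt ↥(Sᶜ) rfl (H.induce Sᶜ) μ hμ
      have hN0 : H.neighborFinset v0 = {v1} := by
        ext w
        rw [SimpleGraph.mem_neighborFinset, Finset.mem_singleton]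
        exact ⟨fun hw => hA w hw, fun hw => hw ▸ h01⟩
      have hmaster : eigMult H μ ≤ eigMult (H.induce Sᶜ) μ + 1 := by
        apply master H μ S v0 hv0S
        intro x hx h0 s hs
        have hrow := row_eq H hx
        have h1 : x v1 = 0 := by
          have := hrow v0
          rw [hN0, Finset.sum_singleton, h0, mul_zero] at this
          exact this
        have hleaf : ∀ w, H.Adj v1 w → w ≠ v0 → w ≠ v2 → x w = 0 := by
          intro w hw hw0 hw2
          rcases hB1 w hw with rfl | rfl | hz
          · exact absurd rfl hw0
          · exact absurd rfl hw2
          · have hNw : H.neighborFinset w = {v1} := by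
              ext z
              rw [SimpleGraph.mem_neighborFinset, Finset.mem_singleton]
              exact ⟨fun hzz => hz z hzz, fun hzz => hzz ▸ hw.symm⟩
            have := hrow w
            rw [hNw, Finset.sum_singleton, h1] at this
            rcases mul_eq_zero.mp this.symm with hc | hc
            · exact absurd hc hμ
            · exact hc
        have h2 : x v2 = 0 := by
          have hsum := hrow v1
          rw [h1, mul_zero] at hsum
          have heq : ∑ w ∈ H.neighborFinset v1, x w = x v2 := by
            apply Finset.sum_eq_single_of_mem v2 ((mem_nbr H).mpr h12)
            intro w hwmem hwne
            have hadjvw : H.Adj v1 w := (mem_nbr H).mp hwmem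
            by_cases hw0 : w = v0
            · subst hw0; exact h0
            · exact hleaf w hadjvw hw0 hwne
          rw [heq] at hsum
          exact hsum
        rw [hSdef] at hs
        rcases Set.mem_insert_iff.mp hs with rfl | hsN
        · exact h1
        · have hadjvw : H.Adj v1 s := hsN
          by_cases hs0 : s = v0
          · subst hs0; exact h0
          by_cases hs2 : s = v2
          · subst hs2; exact h2
          · exact hleaf s hadjvw hs0 hs2
      have hmatch : indMatchNum (H.induce Sᶜ) + 1 ≤ indMatchNum H := by
        apply indMatchNum_insert H S v0 v1 h01 hv0S hv1S
        intro w hwD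
        constructor
        · intro hadj
          apply hwD
          rw [hSdef, hA w hadj]
          exact Set.mem_insert _ _
        · intro hadj
          apply hwD
          rw [hSdef]
          exact Set.mem_insert_of_mem _ hadj
      have hedge := edge_count H S
      have hsub : (H.incidenceFinset v1 ∪ H.incidenceFinset v2) ⊆
          H.edgeFinset.filter (fun e => ∃ x ∈ e, x ∈ S) := by
        intro e hee
        rcases Finset.mem_union.mp hee with hee | hee <;>
          rw [SimpleGraph.mem_incidenceFinset] at hee <;> rw [Finset.mem_filter]
        · exact ⟨SimpleGraph.mem_edgeFinset.mpr hee.1, v1, hee.2, hv1S⟩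
        · exact ⟨SimpleGraph.mem_edgeFinset.mpr hee.1, v2, hee.2, hv2S⟩
      have hinterv : (H.incidenceFinset v1 ∩ H.incidenceFinset v2) ⊆ {s(v1, v2)} := by
        intro e hee
        rw [Finset.mem_inter, SimpleGraph.mem_incidenceFinset,
          SimpleGraph.mem_incidenceFinset] at hee
        obtain ⟨⟨he1, hm1⟩, ⟨he2, hm2⟩⟩ := hee
        rw [Finset.mem_singleton]
        induction e using Sym2.inductionOn with
        | hf a b =>
          rcases Sym2.mem_iff.mp hm1 with rfl | rfl
          · rcases Sym2.mem_iff.mp hm2 with h' | h'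
            · exact absurd h'.symm h12.ne
            · rw [← h']
          · rcases Sym2.mem_iff.mp hm2 with h' | h'
            · rw [← h', Sym2.eq_swap]
            · exact absurd h'.symm h12.ne
      have hup : (H.incidenceFinset v1 ∩ H.incidenceFinset v2).card ≤ 1 := by
        have := Finset.card_le_card hinterv
        simpa using this
      have huni := Finset.card_union_add_card_inter
        (H.incidenceFinset v1) (H.incidenceFinset v2)
      have hle : (H.incidenceFinset v1 ∪ H.incidenceFinset v2).card ≤
          (H.edgeFinset.filter (fun e => ∃ x ∈ e, x ∈ S)).card :=
        Finset.card_le_card hsub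
      have hi1 : (H.incidenceFinset v1).card = (H.neighborFinset v1).card :=
        SimpleGraph.card_incidenceFinset_eq_degree H v1
      have hi2 : (H.incidenceFinset v2).card = (H.neighborFinset v2).card :=
        SimpleGraph.card_incidenceFinset_eq_degree H v2
      have hcomps : Nat.card (H.induce Sᶜ).ConnectedComponent
          + 1 ≤ Nat.card H.ConnectedComponent + ((H.neighborFinset v2).erase v1).card := by
        apply comps_master H S v1 hv1S
        · intro d hd
          rw [hSdef] at hd
          rcases Set.mem_insert_iff.mp hd with rfl | hdN
          · exact SimpleGraph.Reachable.refl _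
          · exact (SimpleGraph.Reachable.symm (SimpleGraph.Adj.reachable hdN))
        · intro x hx hxreach
          obtain ⟨p⟩ := hxreach
          obtain ⟨w', hw', ⟨y, hy, hadjwy⟩, hre⟩ := first_exit H S p hx hv1S
          rw [hSdef] at hy
          rcases Set.mem_insert_iff.mp hy with rfl | hyN
          · exfalso
            apply hw'
            rw [hSdef]
            exact Set.mem_insert_of_mem _ (hadjwy.symm : H.Adj y w')
          · have hyadj : H.Adj v1 y := hyN
            rcases hB1 y hyadj with rfl | rfl | hz
            · exfalso
              apply hw'
              rw [hA w' hadjwy.symm]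
              exact hv1S
            · refine ⟨w', hw', ?_, hre⟩
              refine Finset.mem_erase.mpr ⟨fun hc => hw' (hc ▸ hv1S), ?_⟩
              rw [mem_nbr]
              exact hadjwy.symm
            · exfalso
              apply hw'
              rw [hz w' hadjwy.symm]
              exact hv1S
      have hRcard : ((H.neighborFinset v2).erase v1).card + 1 = (H.neighborFinset v2).card := by
        apply Finset.card_erase_add_one
        rw [mem_nbr]
        exact h12.symm
      omega

theorem stmt13 {V : Type*} [Fintype V] (G : SimpleGraph V) (hc : G.Connected)
    (μ : ℝ) (hμ : μ ≠ 0) (h : HasEig G μ) :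
    eigMult G μ ≤ indMatchNum G + cyclomatic G := by
  have hkey := key (Fintype.card V) V rfl G μ hμ
  have hcc : Nat.card G.ConnectedComponent = 1 := by
    rw [Nat.card_eq_one_iff_unique]
    constructor
    · constructor
      intro a b
      refine SimpleGraph.ConnectedComponent.ind₂ (fun u v => ?_) a b
      exact SimpleGraph.ConnectedComponent.sound (hc.preconnected u v)
    · have : Nonempty V := hc.nonempty
      exact ⟨G.connectedComponentMk (Classical.arbitrary V)⟩
  rw [hcc] at hkey
  unfold cyclomatic
  omega
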